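/- Price's Theorem (univariate): If θ ~ N(μ, σ²) and f : ℝ → ℝ is twice differentiable with suitable integrability, then the derivative of E[f(θ)] with respect to σ² equals (1/2) E[f''(θ)]. -/

import Mathlib

open MeasureTheory Real

/-- Univariate Gaussian density of `N(μ, v)` parameterized by the variance `v`. -/
noncomputable def gaussPDFv (μ v : ℝ) (θ : ℝ) : ℝ :=
  (2 * Real.pi * v) ^ (-(1 : ℝ) / 2) * Real.exp (-(θ - μ) ^ 2 / (2 * v))

lemma key_integrable (a : ℝ) (ha : 0 < a) (μ : ℝ) (n : ℕ) :
    Integrable (fun x : ℝ => (1 + |x|) ^ n * Real.exp (-(a * (x - μ) ^ 2))) := by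
  have h4 : 0 < a / 4 := by linarith
  have base := ((integrable_exp_neg_mul_sq h4).const_mul (Real.exp (a * μ ^ 2 + n ^ 2 / a)))
  refine base.mono' ?_ ?_
  · exact (Continuous.mul (by continuity) (by continuity)).aestronglyMeasurable
  · filter_upwards with x
    have h0 : (0:ℝ) ≤ (1 + |x|) ^ n * Real.exp (-(a * (x - μ) ^ 2)) := by positivity
    rw [Real.norm_eq_abs, abs_of_nonneg h0]
    have h1 : (1 + |x|) ^ n ≤ Real.exp ((n : ℝ) * |x|) := by
      rw [Real.exp_nat_mul]
      exact pow_le_pow_left₀ (by positivity) (by linarith [Real.add_one_le_exp |x|]) n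
    calc (1 + |x|) ^ n * Real.exp (-(a * (x - μ) ^ 2))
        ≤ Real.exp ((n : ℝ) * |x|) * Real.exp (-(a * (x - μ) ^ 2)) := by
          gcongr
      _ = Real.exp ((n : ℝ) * |x| - a * (x - μ) ^ 2) := by rw [← Real.exp_add]; ring_nf
      _ ≤ Real.exp (a * μ ^ 2 + (n:ℝ) ^ 2 / a - a / 4 * x ^ 2) := by
          apply Real.exp_le_exp.mpr
          have had : a * ((n:ℝ) ^ 2 / a) = (n:ℝ) ^ 2 := by field_simp
          have h2 : a * ((n:ℝ) * |x|) ≤ a * (a / 4 * |x| ^ 2 + (n:ℝ) ^ 2 / a) := by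
            nlinarith [sq_nonneg (a * |x| - 2 * (n:ℝ))]
          have h3 : (n:ℝ) * |x| ≤ a / 4 * |x| ^ 2 + (n:ℝ) ^ 2 / a :=
            (mul_le_mul_iff_of_pos_left ha).mp h2
          rw [sq_abs] at h3
          nlinarith [sq_nonneg (x - 2 * μ)]
      _ = Real.exp (a * μ ^ 2 + (n:ℝ) ^ 2 / a) * Real.exp (-(a / 4) * x ^ 2) := by
          rw [← Real.exp_add]; ring_nf

lemma prod_integrable (μ s : ℝ) (hs : 0 < s) (C : ℝ) (k : ℕ) (g h : ℝ → ℝ)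
    (hm : AEStronglyMeasurable (fun x => g x * h x) volume)
    (hg : ∀ x, |g x| ≤ C * ((1 + |x|) ^ k * Real.exp (-(x - μ) ^ 2 / (2 * s))))
    (c : ℝ) (n : ℕ) (hh : ∀ x, |h x| ≤ c * (1 + |x|) ^ n) :
    Integrable (fun x => g x * h x) := by
  have hc : 0 ≤ c := le_trans (abs_nonneg _) (by simpa using hh 0)
  have hC : 0 ≤ C := by
    have h00 := (abs_nonneg (g 0)).trans (hg 0)
    have hp : 0 < (1 + |(0:ℝ)|) ^ k * Real.exp (-((0:ℝ) - μ) ^ 2 / (2 * s)) := by positivity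
    by_contra hCn
    push_neg at hCn
    nlinarith
  refine ((key_integrable (1 / (2 * s)) (by positivity) μ (k + n)).const_mul (C * c)).mono'
    hm ?_
  filter_upwards with x
  rw [Real.norm_eq_abs, abs_mul]
  calc |g x| * |h x|
      ≤ (C * ((1 + |x|) ^ k * Real.exp (-(x - μ) ^ 2 / (2 * s)))) * (c * (1 + |x|) ^ n) :=
        mul_le_mul (hg x) (hh x) (abs_nonneg _) (by positivity)
    _ = C * c * ((1 + |x|) ^ (k + n) * Real.exp (-(1 / (2 * s) * (x - μ) ^ 2))) := by
        rw [show -(x - μ) ^ 2 / (2 * s) = -(1 / (2 * s) * (x - μ) ^ 2) by ring, pow_add]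
        ring

lemma gauss_continuous (μ w : ℝ) : Continuous (gaussPDFv μ w) := by
  unfold gaussPDFv; fun_prop

lemma gauss_pos (μ : ℝ) {w : ℝ} (hw : 0 < w) (θ : ℝ) : 0 < gaussPDFv μ w θ := by
  unfold gaussPDFv
  have h2 : (0:ℝ) < 2 * Real.pi * w := by positivity
  positivity

lemma gauss_hasDerivAt_theta (μ : ℝ) {v : ℝ} (hv : 0 < v) (θ : ℝ) :
    HasDerivAt (fun t => gaussPDFv μ v t) (gaussPDFv μ v θ * (-(θ - μ) / v)) θ := by
  have hg : HasDerivAt (fun t : ℝ => -(t - μ) ^ 2 / (2 * v)) (-(θ - μ) / v) θ := by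
    have h := (((hasDerivAt_id θ).sub_const μ).pow 2).neg.div_const (2 * v)
    refine h.congr_deriv ?_
    simp only [id]
    field_simp
    ring
  have h2 := (hg.exp).const_mul ((2 * Real.pi * v) ^ (-(1 : ℝ) / 2))
  unfold gaussPDFv
  refine h2.congr_deriv ?_
  ring

lemma q_hasDerivAt (μ : ℝ) {v : ℝ} (hv : 0 < v) (θ : ℝ) :
    HasDerivAt (fun t => gaussPDFv μ v t * (-(t - μ) / v))
      (gaussPDFv μ v θ * ((θ - μ) ^ 2 / v ^ 2 - 1 / v)) θ := by
  have hL : HasDerivAt (fun t : ℝ => -(t - μ) / v) (-1 / v) θ := by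
    have h := (((hasDerivAt_id θ).sub_const μ).neg).div_const v
    exact h
  have h := (gauss_hasDerivAt_theta μ hv θ).mul hL
  refine h.congr_deriv ?_
  ring

lemma gauss_hasDerivAt_w (μ θ : ℝ) {w : ℝ} (hw : 0 < w) :
    HasDerivAt (fun u => gaussPDFv μ u θ)
      (gaussPDFv μ w θ * ((θ - μ) ^ 2 / (2 * w ^ 2) - 1 / (2 * w))) w := by
  have h2πw : (0:ℝ) < 2 * Real.pi * w := by positivity
  have h1 : HasDerivAt (fun u : ℝ => 2 * Real.pi * u) (2 * Real.pi) w := by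
    simpa using (hasDerivAt_id w).const_mul (2 * Real.pi)
  have h2 : HasDerivAt (fun u : ℝ => (2 * Real.pi * u) ^ (-(1 : ℝ) / 2))
      ((-(1:ℝ)/2) * (2 * Real.pi * w) ^ (-(1:ℝ)/2 - 1) * (2 * Real.pi)) w :=
    (Real.hasDerivAt_rpow_const (Or.inl h2πw.ne')).comp w h1
  have h3 : HasDerivAt (fun u : ℝ => -(θ - μ) ^ 2 / (2 * u)) ((θ - μ) ^ 2 / (2 * w ^ 2)) w := by
    have h := (hasDerivAt_inv hw.ne').const_mul (-(θ - μ) ^ 2 / 2)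
    have hfe : (fun u : ℝ => -(θ - μ) ^ 2 / (2 * u)) = fun u => -(θ - μ) ^ 2 / 2 * u⁻¹ := by
      funext u; ring
    rw [hfe]
    refine h.congr_deriv ?_
    field_simp
  have h4 := h3.exp
  have h5 := h2.mul h4
  have hrw : (2 * Real.pi * w) ^ (-(1:ℝ)/2 - 1)
      = (2 * Real.pi * w) ^ (-(1:ℝ)/2) / (2 * Real.pi * w) := by
    rw [Real.rpow_sub h2πw, Real.rpow_one]
  unfold gaussPDFv
  refine h5.congr_deriv ?_
  rw [hrw]
  have hπ : Real.pi ≠ 0 := Real.pi_ne_zero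
  field_simp
  ring

lemma abs_sub_le_poly (μ x : ℝ) : |x - μ| ≤ (1 + |μ|) * (1 + |x|) := by
  have h := abs_sub x μ
  nlinarith [abs_nonneg x, abs_nonneg μ, mul_nonneg (abs_nonneg μ) (abs_nonneg x)]

set_option maxHeartbeats 1000000 in
/-- Price's Theorem (univariate): for `θ ~ N(μ, v)` and twice differentiable `f` with
`f, f', f''` of at most polynomial growth, `∂/∂v E[f(θ)] = (1/2) E[f''(θ)]`. -/
theorem price_univariate (μ v : ℝ) (hv : 0 < v) (f f' f'' : ℝ → ℝ)
    (hderiv : ∀ x, HasDerivAt f (f' x) x)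
    (hderiv' : ∀ x, HasDerivAt f' (f'' x) x)
    (hfpoly : ∃ c n, ∀ x : ℝ, |f x| ≤ c * (1 + |x|) ^ n)
    (hf'poly : ∃ c n, ∀ x : ℝ, |f' x| ≤ c * (1 + |x|) ^ n)
    (hf''poly : ∃ c n, ∀ x : ℝ, |f'' x| ≤ c * (1 + |x|) ^ n) :
    HasDerivAt (fun w : ℝ => ∫ θ : ℝ, gaussPDFv μ w θ * f θ)
      ((1 / 2) * ∫ θ : ℝ, gaussPDFv μ v θ * f'' θ) v := by
  obtain ⟨c, n, hf⟩ := hfpoly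
  obtain ⟨c1, n1, hf1⟩ := hf'poly
  obtain ⟨c2, n2, hf2⟩ := hf''poly
  have hπ := Real.pi_pos
  have h2πv : (0:ℝ) < 2 * Real.pi * v := by nlinarith
  have hπv : (0:ℝ) < Real.pi * v := by nlinarith
  have hc : 0 ≤ c := le_trans (abs_nonneg _) (by simpa using hf 0)
  -- continuity of f, f', f''
  have hfc : Continuous f := continuous_iff_continuousAt.mpr fun x => (hderiv x).continuousAt
  have hf'c : Continuous f' := continuous_iff_continuousAt.mpr fun x => (hderiv' x).continuousAt
  -- notation
  set Cp : ℝ := (2 * Real.pi * v) ^ (-(1:ℝ)/2) with hCpdef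
  have hCp : 0 < Cp := Real.rpow_pos_of_pos h2πv _
  set M : ℝ := 1 + |μ| with hMdef
  have hM : 0 < M := by positivity
  -- pointwise bounds on the pdf and its θ-derivatives
  have hPb : ∀ x, |gaussPDFv μ v x| ≤ Cp * ((1 + |x|) ^ 0 * Real.exp (-(x - μ) ^ 2 / (2 * v))) := by
    intro x
    rw [abs_of_pos (gauss_pos μ hv x), pow_zero, one_mul]
    exact le_of_eq rfl
  have hqb : ∀ x, |gaussPDFv μ v x * (-(x - μ) / v)|
      ≤ (Cp * M / v) * ((1 + |x|) ^ 1 * Real.exp (-(x - μ) ^ 2 / (2 * v))) := by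
    intro x
    have hE : (0:ℝ) < Real.exp (-(x - μ) ^ 2 / (2 * v)) := Real.exp_pos _
    rw [abs_mul, abs_of_pos (gauss_pos μ hv x), abs_div, abs_neg, abs_of_pos hv]
    have h1 := abs_sub_le_poly μ x
    calc Cp * Real.exp (-(x - μ) ^ 2 / (2 * v)) * (|x - μ| / v)
        = (Cp * Real.exp (-(x - μ) ^ 2 / (2 * v)) / v) * |x - μ| := by ring
      _ ≤ (Cp * Real.exp (-(x - μ) ^ 2 / (2 * v)) / v) * (M * (1 + |x|)) := by
          apply mul_le_mul_of_nonneg_left h1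
          exact div_nonneg (mul_nonneg hCp.le hE.le) hv.le
      _ = (Cp * M / v) * ((1 + |x|) ^ 1 * Real.exp (-(x - μ) ^ 2 / (2 * v))) := by
          rw [pow_one]; ring
  have hq'b : ∀ x, |gaussPDFv μ v x * ((x - μ) ^ 2 / v ^ 2 - 1 / v)|
      ≤ (Cp * (M ^ 2 / v ^ 2 + 1 / v)) * ((1 + |x|) ^ 2 * Real.exp (-(x - μ) ^ 2 / (2 * v))) := by
    intro x
    have hE : (0:ℝ) < Real.exp (-(x - μ) ^ 2 / (2 * v)) := Real.exp_pos _
    rw [abs_mul, abs_of_pos (gauss_pos μ hv x)]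
    have h1 := abs_sub_le_poly μ x
    rw [← hMdef] at h1
    have hsq : (x - μ) ^ 2 ≤ M ^ 2 * (1 + |x|) ^ 2 := by
      have h2 := mul_self_le_mul_self (abs_nonneg (x - μ)) h1
      nlinarith [sq_abs (x - μ)]
    have hT : (1:ℝ) ≤ (1 + |x|) ^ 2 := by nlinarith [abs_nonneg x]
    have hmid : |(x - μ) ^ 2 / v ^ 2 - 1 / v| ≤ (M ^ 2 / v ^ 2 + 1 / v) * (1 + |x|) ^ 2 := by
      have habs : |(x - μ) ^ 2 / v ^ 2 - 1 / v| ≤ (x - μ) ^ 2 / v ^ 2 + 1 / v := by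
        have := abs_sub ((x - μ) ^ 2 / v ^ 2) (1 / v)
        rw [abs_of_nonneg (by positivity : (0:ℝ) ≤ (x - μ) ^ 2 / v ^ 2),
          abs_of_nonneg (by positivity : (0:ℝ) ≤ 1 / v)] at this
        exact this
      have h2 : (x - μ) ^ 2 / v ^ 2 ≤ M ^ 2 * (1 + |x|) ^ 2 / v ^ 2 :=
        (div_le_div_iff_of_pos_right (by positivity)).mpr hsq
      have h3 := mul_le_mul_of_nonneg_left hT (show (0:ℝ) ≤ 1 / v by positivity)
      have heq : (M ^ 2 / v ^ 2 + 1 / v) * (1 + |x|) ^ 2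
          = M ^ 2 * (1 + |x|) ^ 2 / v ^ 2 + 1 / v * (1 + |x|) ^ 2 := by ring
      linarith [heq]
    calc Cp * Real.exp (-(x - μ) ^ 2 / (2 * v)) * |(x - μ) ^ 2 / v ^ 2 - 1 / v|
        ≤ Cp * Real.exp (-(x - μ) ^ 2 / (2 * v)) * ((M ^ 2 / v ^ 2 + 1 / v) * (1 + |x|) ^ 2) := by
          apply mul_le_mul_of_nonneg_left hmid (by positivity)
      _ = (Cp * (M ^ 2 / v ^ 2 + 1 / v)) * ((1 + |x|) ^ 2 * Real.exp (-(x - μ) ^ 2 / (2 * v))) := by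
          ring
  -- measurability of f''
  have hf''m : AEStronglyMeasurable f'' (volume : Measure ℝ) := by
    have : f'' = deriv f' := funext fun x => ((hderiv' x).deriv).symm
    rw [this]
    exact (stronglyMeasurable_deriv f').aestronglyMeasurable
  -- continuity of the pdf and q, q'
  have hPc : Continuous (gaussPDFv μ v) := gauss_continuous μ v
  have hqc : Continuous (fun t => gaussPDFv μ v t * (-(t - μ) / v)) :=
    hPc.mul (((continuous_id.sub continuous_const).neg).div_const v)
  have hq'c : Continuous (fun t => gaussPDFv μ v t * ((t - μ) ^ 2 / v ^ 2 - 1 / v)) :=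
    hPc.mul ((((continuous_id.sub continuous_const).pow 2).div_const (v ^ 2)).sub
      continuous_const)
  -- integrability of the products
  have hPf : Integrable (fun x => gaussPDFv μ v x * f x) :=
    prod_integrable μ v hv Cp 0 _ f ((hPc.mul hfc).aestronglyMeasurable) hPb c n hf
  have hPf' : Integrable (fun x => gaussPDFv μ v x * f' x) :=
    prod_integrable μ v hv Cp 0 _ f' ((hPc.mul hf'c).aestronglyMeasurable) hPb c1 n1 hf1
  have hPf'' : Integrable (fun x => gaussPDFv μ v x * f'' x) :=
    prod_integrable μ v hv Cp 0 _ f'' (hPc.aestronglyMeasurable.mul hf''m) hPb c2 n2 hf2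
  have hqf : Integrable (fun x => (gaussPDFv μ v x * (-(x - μ) / v)) * f x) :=
    prod_integrable μ v hv (Cp * M / v) 1 _ f ((hqc.mul hfc).aestronglyMeasurable) hqb c n hf
  have hqf' : Integrable (fun x => (gaussPDFv μ v x * (-(x - μ) / v)) * f' x) :=
    prod_integrable μ v hv (Cp * M / v) 1 _ f' ((hqc.mul hf'c).aestronglyMeasurable) hqb c1 n1 hf1
  have hq'f : Integrable (fun x => (gaussPDFv μ v x * ((x - μ) ^ 2 / v ^ 2 - 1 / v)) * f x) :=
    prod_integrable μ v hv (Cp * (M ^ 2 / v ^ 2 + 1 / v)) 2 _ f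
      ((hq'c.mul hfc).aestronglyMeasurable) hq'b c n hf
  -- integration by parts, twice
  have ibpA : ∫ x, (gaussPDFv μ v x * (-(x - μ) / v)) * f' x
      = -∫ x, (gaussPDFv μ v x * ((x - μ) ^ 2 / v ^ 2 - 1 / v)) * f x :=
    integral_mul_deriv_eq_deriv_mul_of_integrable (fun x _ => q_hasDerivAt μ hv x) (fun x _ => hderiv x)
      hqf' hq'f hqf
  have ibpB : ∫ x, gaussPDFv μ v x * f'' x
      = -∫ x, (gaussPDFv μ v x * (-(x - μ) / v)) * f' x :=
    integral_mul_deriv_eq_deriv_mul_of_integrable (fun x _ => gauss_hasDerivAt_theta μ hv x)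
      (fun x _ => hderiv' x) hPf'' hqf' hPf'
  -- differentiation under the integral sign
  have h_meas : ∀ᶠ w in nhds v,
      AEStronglyMeasurable (fun θ : ℝ => gaussPDFv μ w θ * f θ) (volume : Measure ℝ) :=
    Filter.Eventually.of_forall fun w => ((gauss_continuous μ w).mul hfc).aestronglyMeasurable
  have h_meas' : AEStronglyMeasurable
      (fun θ : ℝ => gaussPDFv μ v θ * ((θ - μ) ^ 2 / (2 * v ^ 2) - 1 / (2 * v)) * f θ)
      (volume : Measure ℝ) :=
    ((hPc.mul ((((continuous_id.sub continuous_const).pow 2).div_const (2 * v ^ 2)).sub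
      continuous_const)).mul hfc).aestronglyMeasurable
  have hmidc : (0:ℝ) ≤ M ^ 2 * 2 / v ^ 2 + 1 / v :=
    add_nonneg (div_nonneg (by positivity) (by positivity)) (div_nonneg zero_le_one hv.le)
  have h_bound : ∀ᵐ θ : ℝ, ∀ w ∈ Metric.ball v (v / 2),
      ‖gaussPDFv μ w θ * ((θ - μ) ^ 2 / (2 * w ^ 2) - 1 / (2 * w)) * f θ‖
        ≤ (Real.pi * v) ^ (-(1:ℝ)/2) * (M ^ 2 * 2 / v ^ 2 + 1 / v) * c
          * ((1 + |θ|) ^ (n + 2) * Real.exp (-(1 / (3 * v) * (θ - μ) ^ 2))) := by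
    refine Filter.Eventually.of_forall fun θ w hw => ?_
    rw [Metric.mem_ball, Real.dist_eq] at hw
    obtain ⟨hw1', hw2'⟩ := abs_lt.mp hw
    have hw1 : v / 2 < w := by linarith
    have hw2 : w < 3 * v / 2 := by linarith
    have hw0 : (0:ℝ) < w := by linarith
    rw [Real.norm_eq_abs, abs_mul, abs_mul, abs_of_pos (gauss_pos μ hw0 θ)]
    have t1 : (2 * Real.pi * w) ^ (-(1:ℝ)/2) ≤ (Real.pi * v) ^ (-(1:ℝ)/2) :=
      Real.rpow_le_rpow_of_nonpos hπv (by nlinarith) (by norm_num)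
    have t2 : Real.exp (-(θ - μ) ^ 2 / (2 * w)) ≤ Real.exp (-(1 / (3 * v) * (θ - μ) ^ 2)) := by
      apply Real.exp_le_exp.mpr
      have h23 : (θ - μ) ^ 2 / (3 * v) ≤ (θ - μ) ^ 2 / (2 * w) := by
        rw [div_le_div_iff₀ (by linarith) (by linarith)]
        nlinarith [sq_nonneg (θ - μ)]
      have hg1 : -(θ - μ) ^ 2 / (2 * w) = -((θ - μ) ^ 2 / (2 * w)) := by ring
      have hg2 : -(1 / (3 * v) * (θ - μ) ^ 2) = -((θ - μ) ^ 2 / (3 * v)) := by ring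
      rw [hg1, hg2]
      exact neg_le_neg h23
    have t3 : |(θ - μ) ^ 2 / (2 * w ^ 2) - 1 / (2 * w)|
        ≤ (M ^ 2 * 2 / v ^ 2 + 1 / v) * (1 + |θ|) ^ 2 := by
      have h1 := abs_sub_le_poly μ θ
      rw [← hMdef] at h1
      have hsq : (θ - μ) ^ 2 ≤ M ^ 2 * (1 + |θ|) ^ 2 := by
        have h2 := mul_self_le_mul_self (abs_nonneg (θ - μ)) h1
        nlinarith [sq_abs (θ - μ)]
      have hT : (1:ℝ) ≤ (1 + |θ|) ^ 2 := by nlinarith [abs_nonneg θ]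
      have habs : |(θ - μ) ^ 2 / (2 * w ^ 2) - 1 / (2 * w)|
          ≤ (θ - μ) ^ 2 / (2 * w ^ 2) + 1 / (2 * w) := by
        have := abs_sub ((θ - μ) ^ 2 / (2 * w ^ 2)) (1 / (2 * w))
        rw [abs_of_nonneg (by positivity : (0:ℝ) ≤ (θ - μ) ^ 2 / (2 * w ^ 2)),
          abs_of_nonneg (by positivity : (0:ℝ) ≤ 1 / (2 * w))] at this
        exact this
      have c1 : 1 / (2 * w) ≤ 1 / v := by
        rw [div_le_div_iff₀ (by linarith) hv]; linarith
      have c2 : (θ - μ) ^ 2 / (2 * w ^ 2) ≤ (θ - μ) ^ 2 * 2 / v ^ 2 := by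
        rw [div_le_div_iff₀ (by positivity) (by positivity)]
        have h4 : v ^ 2 ≤ 4 * w ^ 2 := by nlinarith
        nlinarith [mul_le_mul_of_nonneg_left h4 (sq_nonneg (θ - μ))]
      have c3 : (θ - μ) ^ 2 * 2 / v ^ 2 ≤ M ^ 2 * (1 + |θ|) ^ 2 * 2 / v ^ 2 := by
        have hnum : (θ - μ) ^ 2 * 2 ≤ M ^ 2 * (1 + |θ|) ^ 2 * 2 := by linarith
        exact div_le_div_of_nonneg_right hnum (by positivity) -- try name

      have c4 : 1 / v * 1 ≤ 1 / v * (1 + |θ|) ^ 2 :=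
        mul_le_mul_of_nonneg_left hT (by positivity)
      have heq : (M ^ 2 * 2 / v ^ 2 + 1 / v) * (1 + |θ|) ^ 2
          = M ^ 2 * (1 + |θ|) ^ 2 * 2 / v ^ 2 + 1 / v * (1 + |θ|) ^ 2 := by ring
      linarith [habs, c1, c2, c3, c4, heq]
    have t4 := hf θ
    unfold gaussPDFv
    have hnn1 : (0:ℝ) ≤ (Real.pi * v) ^ (-(1:ℝ)/2) * Real.exp (-(1 / (3 * v) * (θ - μ) ^ 2)) :=
      mul_nonneg (Real.rpow_nonneg hπv.le _) (Real.exp_pos _).le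
    calc (2 * Real.pi * w) ^ (-(1:ℝ)/2) * Real.exp (-(θ - μ) ^ 2 / (2 * w))
          * |(θ - μ) ^ 2 / (2 * w ^ 2) - 1 / (2 * w)| * |f θ|
        ≤ ((Real.pi * v) ^ (-(1:ℝ)/2) * Real.exp (-(1 / (3 * v) * (θ - μ) ^ 2)))
          * ((M ^ 2 * 2 / v ^ 2 + 1 / v) * (1 + |θ|) ^ 2) * (c * (1 + |θ|) ^ n) := by
          apply mul_le_mul ?_ t4 (abs_nonneg _) ?_
          · apply mul_le_mul ?_ t3 (abs_nonneg _) hnn1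
            exact mul_le_mul t1 t2 (Real.exp_pos _).le (Real.rpow_nonneg hπv.le _)
          · exact mul_nonneg hnn1 (mul_nonneg hmidc (by positivity))
      _ = (Real.pi * v) ^ (-(1:ℝ)/2) * (M ^ 2 * 2 / v ^ 2 + 1 / v) * c
          * ((1 + |θ|) ^ (n + 2) * Real.exp (-(1 / (3 * v) * (θ - μ) ^ 2))) := by ring
  have h_bint : Integrable (fun θ : ℝ =>
      (Real.pi * v) ^ (-(1:ℝ)/2) * (M ^ 2 * 2 / v ^ 2 + 1 / v) * c
        * ((1 + |θ|) ^ (n + 2) * Real.exp (-(1 / (3 * v) * (θ - μ) ^ 2)))) :=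
    (key_integrable (1 / (3 * v)) (by positivity) μ (n + 2)).const_mul _
  have h_diff : ∀ᵐ θ : ℝ, ∀ w ∈ Metric.ball v (v / 2),
      HasDerivAt (fun u => gaussPDFv μ u θ * f θ)
        (gaussPDFv μ w θ * ((θ - μ) ^ 2 / (2 * w ^ 2) - 1 / (2 * w)) * f θ) w := by
    refine Filter.Eventually.of_forall fun θ w hw => ?_
    rw [Metric.mem_ball, Real.dist_eq] at hw
    obtain ⟨hw1', hw2'⟩ := abs_lt.mp hw
    have hw0 : (0:ℝ) < w := by linarith
    exact (gauss_hasDerivAt_w μ θ hw0).mul_const (f θ)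
  obtain ⟨-, hD⟩ := hasDerivAt_integral_of_dominated_loc_of_deriv_le
    (F := fun w θ => gaussPDFv μ w θ * f θ)
    (F' := fun w θ => gaussPDFv μ w θ * ((θ - μ) ^ 2 / (2 * w ^ 2) - 1 / (2 * w)) * f θ)
    (Metric.ball_mem_nhds v (show (0:ℝ) < v / 2 by linarith)) h_meas hPf h_meas' h_bound h_bint h_diff
  -- rewrite the derivative value
  have e2 : ∫ x, (gaussPDFv μ v x * ((x - μ) ^ 2 / v ^ 2 - 1 / v)) * f x
      = ∫ x, gaussPDFv μ v x * f'' x := by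
    rw [ibpB]; linarith [ibpA]
  have e1 : (fun θ : ℝ => gaussPDFv μ v θ * ((θ - μ) ^ 2 / (2 * v ^ 2) - 1 / (2 * v)) * f θ)
      = fun θ : ℝ => (1 / 2) * ((gaussPDFv μ v θ * ((θ - μ) ^ 2 / v ^ 2 - 1 / v)) * f θ) := by
    funext θ; ring
  have heq : (∫ θ : ℝ, gaussPDFv μ v θ * ((θ - μ) ^ 2 / (2 * v ^ 2) - 1 / (2 * v)) * f θ)
      = (1 / 2) * ∫ θ : ℝ, gaussPDFv μ v θ * f'' θ := by
    rw [e1, integral_const_mul, e2]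
  rw [heq] at hD
  exact hD
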